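/- Let ν > 0, α = arcsinh(1/ν), C = (π/2)/α, and ρ = ρ₀(C) = C + √(1+C²). Then cosh(α·z) ≠ 0 for every z in the open Bernstein ellipse E°_ρ = {u+iv ∈ ℂ : u²/a_ρ² + v²/b_ρ² < 1}, where a_ρ = (ρ+ρ⁻¹)/2 and b_ρ = (ρ−ρ⁻¹)/2. (This is the statement that for μ = 0 the transplanted integrand is analytic in the Bernstein ellipse of parameter ρ₀(C_{2ν}) appearing in part (1) of the paper's main theorem.) -/

import Mathlib

/-- Let `ν > 0`, `α = arcsinh(1/ν)`, `C = (π/2)/α`, and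
`ρ = ρ₀(C) = C + √(1+C²)`. Then `cosh(α·z) ≠ 0` for every `z` in the open Bernstein
ellipse `E°_ρ = {u+iv : u²/a_ρ² + v²/b_ρ² < 1}` with `a_ρ = (ρ+ρ⁻¹)/2`,
`b_ρ = (ρ−ρ⁻¹)/2`: for `μ = 0` the transplanted integrand is analytic in the
Bernstein ellipse of parameter `ρ₀(C_{2ν})`. -/
theorem transplanted_denominator_nonzero_center (ν : ℝ) (hν : 0 < ν)
    (α C ρ : ℝ) (hα : α = Real.arsinh (1 / ν)) (hC : C = (Real.pi / 2) / α)
    (hρ : ρ = C + Real.sqrt (1 + C ^ 2))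
    (aρ bρ : ℝ) (haρ : aρ = (ρ + ρ⁻¹) / 2) (hbρ : bρ = (ρ - ρ⁻¹) / 2) :
    ∀ z : ℂ, z.re ^ 2 / aρ ^ 2 + z.im ^ 2 / bρ ^ 2 < 1 →
      Complex.cosh ((α : ℂ) * z) ≠ 0 := by
  intro z hz hcosh
  have hαpos : 0 < α := by
    rw [hα]; exact Real.arsinh_pos_iff.mpr (by positivity)
  have hCpos : 0 < C := by rw [hC]; positivity
  have hs : Real.sqrt (1 + C ^ 2) ^ 2 = 1 + C ^ 2 :=
    Real.sq_sqrt (by positivity)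
  have hρpos : 0 < ρ := by
    rw [hρ]; positivity
  have hρinv : ρ⁻¹ = Real.sqrt (1 + C ^ 2) - C := by
    apply inv_eq_of_mul_eq_one_right
    rw [hρ]
    nlinarith [hs]
  have hb : bρ = C := by
    rw [hbρ, hρinv, hρ]; ring
  -- z.im bound
  have him : |z.im| < C := by
    have h1 : z.im ^ 2 / bρ ^ 2 < 1 := by
      have : 0 ≤ z.re ^ 2 / aρ ^ 2 := by positivity
      linarith
    have hb2 : (0:ℝ) < bρ ^ 2 := by rw [hb]; positivity
    have : z.im ^ 2 < bρ ^ 2 := by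
      rw [div_lt_one hb2] at h1; exact h1
    rw [hb] at this
    nlinarith [abs_nonneg z.im, sq_abs z.im]
  -- cosh = cos (w * I)
  have : Complex.cos ((α : ℂ) * z * Complex.I) = 0 := by
    rw [Complex.cos_mul_I]; exact hcosh
  rw [Complex.cos_eq_zero_iff] at this
  obtain ⟨k, hk⟩ := this
  have hre := congrArg Complex.re hk
  simp [Complex.mul_I_re, Complex.mul_re] at hre
  -- hre : -(α * z.im) = (2k+1) * π / 2
  have habs : α * |z.im| = |(2 * (k:ℝ) + 1) * Real.pi / 2| := by
    rw [← hre]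
    rw [abs_neg, abs_mul, abs_of_pos hαpos]
  have hk1 : (1:ℝ) ≤ |2 * (k:ℝ) + 1| := by
    have : (1:ℤ) ≤ |2 * k + 1| := Int.one_le_abs (by omega)
    calc (1:ℝ) ≤ |((2 * k + 1 : ℤ) : ℝ)| := by
          rw [← Int.cast_abs]; exact_mod_cast this
      _ = |2 * (k:ℝ) + 1| := by push_cast; ring_nf
  have hπ : Real.pi / 2 ≤ |(2 * (k:ℝ) + 1) * Real.pi / 2| := by
    rw [abs_div, abs_mul, abs_of_pos Real.pi_pos, abs_of_pos (by norm_num : (0:ℝ) < 2)]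
    have := Real.pi_pos
    calc Real.pi / 2 = 1 * Real.pi / 2 := by ring
      _ ≤ |2 * (k:ℝ) + 1| * Real.pi / 2 := by
          apply div_le_div_of_nonneg_right _ (by norm_num)
          exact mul_le_mul_of_nonneg_right hk1 (le_of_lt Real.pi_pos)
  have hlt : α * |z.im| < α * C := by
    exact mul_lt_mul_of_pos_left him hαpos
  have hαC : α * C = Real.pi / 2 := by
    rw [hC]; field_simp
  rw [habs, hαC] at hlt
  linarith
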